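/- arXiv:2208.02212 — 3 statements merged into one kernel-verified Lean document; each statement's English description precedes it below -/
import Mathlib

section
/- Let n ≥ 1 and let a = (a₀, a₁, …, a_{n−1}) ∈ ℝ^n, viewed as an n×1 matrix parametrizing the affine hyperplane 𝓛_a = {(x, a₀ + a₁x₁ + ⋯ + a_{n−1}x_{n−1}) : x ∈ ℝ^{n−1}} ⊆ ℝ^n. Then a ∉ ℚ^n if and only if for Lebesgue-almost every x ∈ ℝ^{n−1} the vector (x, a₀ + a₁x₁ + ⋯ + a_{n−1}x_{n−1}) ∈ ℝ^n is not singular. -/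
open MeasureTheory Filter

open ENNReal

/-- A vector `x ∈ ℝ^n` is singular. -/
def IsSingularVec {n : ℕ} (x : Fin n → ℝ) : Prop :=
  ∀ c : ℝ, 0 < c → ∃ Q₀ : ℝ, 0 < Q₀ ∧ ∀ Q : ℝ, Q₀ ≤ Q →
    ∃ q : Fin n → ℤ, q ≠ 0 ∧ ∃ q₀ : ℤ,
      |(∑ i, (q i : ℝ) * x i) + (q₀ : ℝ)| < c / Q ^ n ∧ ∀ i, |(q i : ℝ)| ≤ Q

lemma exists_goodN (α : ℝ) (hirr : ∀ r : ℚ, α ≠ (r : ℝ)) (T : ℕ) :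
    ∃ N : ℕ, T ≤ N ∧ 1 ≤ N ∧ ∀ m p : ℤ, m ≠ 0 → |m| ≤ (N : ℤ) →
      1 / (4 * (N:ℝ)) ≤ |(m : ℝ) * α + (p : ℝ)| := by
  by_contra hcon
  push_neg at hcon
  set N₁ : ℕ := max T 1 with hN₁
  have hN₁pos : (1:ℕ) ≤ N₁ := le_max_right _ _
  have H : ∀ N : ℕ, N₁ ≤ N → ∃ m p : ℤ, 1 ≤ m ∧ (m : ℤ) ≤ (N:ℤ) ∧
      |(m : ℝ) * α + (p : ℝ)| < 1 / (4 * (N:ℝ)) := by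
    intro N hN
    obtain ⟨m, p, hm0, hmle, habs⟩ := hcon N (le_trans (le_max_left _ _) hN)
      (le_trans (le_max_right _ _) hN)
    rcases lt_or_gt_of_ne hm0 with hneg | hpos
    · refine ⟨-m, -p, by omega, by rw [abs_of_nonpos hneg.le] at hmle; omega, ?_⟩
      have he : ((-m : ℤ) : ℝ) * α + ((-p : ℤ) : ℝ) = -((m:ℝ) * α + p) := by push_cast; ring
      rw [he, abs_neg]; exact habs
    · exact ⟨m, p, hpos, by rw [abs_of_pos hpos] at hmle; omega, habs⟩
  have hne : ∀ m p : ℤ, 1 ≤ m → (m:ℝ) * α + (p:ℝ) ≠ 0 := by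
    intro m p hm h
    have hm0 : (0:ℝ) < (m:ℝ) := by exact_mod_cast hm
    have : α = ((((-p : ℚ)) / (m : ℚ) : ℚ) : ℝ) := by
      push_cast
      rw [eq_div_iff (ne_of_gt hm0)]
      linear_combination h
    exact hirr _ this
  choose f g hf1 hfle hfabs using H
  set δ : ℤ × ℤ → ℝ := fun mp => |(mp.1 : ℝ) * α + (mp.2 : ℝ)| with hδ
  set Nf : ℤ × ℤ → ℕ := fun mp => max N₁ ⌈1 / (2 * δ mp)⌉₊ with hNf
  have hNfle : ∀ mp, N₁ ≤ Nf mp := fun mp => le_max_left _ _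
  set G : ℕ → ℤ × ℤ := fun k => Nat.rec (motive := fun _ => ℤ × ℤ)
    (⟨f N₁ le_rfl, g N₁ le_rfl⟩)
    (fun _ prev => ⟨f (Nf prev) (hNfle prev), g (Nf prev) (hNfle prev)⟩) k with hG
  have hGsucc : ∀ k, G (k+1) = ⟨f (Nf (G k)) (hNfle (G k)), g (Nf (G k)) (hNfle (G k))⟩ :=
    fun k => rfl
  have hm1 : ∀ k, 1 ≤ (G k).1 := by
    intro k; cases k with
    | zero => exact hf1 _ _
    | succ k => rw [hGsucc k]; exact hf1 _ _
  have hδpos : ∀ k, 0 < δ (G k) := fun k => abs_pos.2 (hne (G k).1 (G k).2 (hm1 k))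
  have hmd : ∀ k, ((G k).1 : ℝ) * δ (G k) < 1/4 := by
    have key : ∀ (N : ℕ) (hN : N₁ ≤ N) (mp : ℤ × ℤ),
        mp = ⟨f N hN, g N hN⟩ → (mp.1 : ℝ) * δ mp < 1/4 := by
      intro N hN mp hmp
      have h1 : (mp.1 : ℝ) ≤ (N : ℝ) := by
        have := hfle N hN; rw [hmp]; exact_mod_cast this
      have h2 : δ mp < 1 / (4 * N) := by rw [hmp]; exact hfabs N hN
      have hNpos : (0:ℝ) < N := by
        have : (1:ℕ) ≤ N := le_trans hN₁pos hN
        exact_mod_cast this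
      calc (mp.1 : ℝ) * δ mp ≤ (N:ℝ) * δ mp :=
            mul_le_mul_of_nonneg_right h1 (abs_nonneg _)
        _ < (N:ℝ) * (1/(4*N)) := mul_lt_mul_of_pos_left h2 hNpos
        _ = 1/4 := by field_simp
    intro k
    cases k with
    | zero => exact key N₁ le_rfl _ rfl
    | succ k => exact key (Nf (G k)) (hNfle (G k)) _ (hGsucc k)
  have hδlt : ∀ k, δ (G k) < 1/4 := by
    intro k
    have h := hmd k
    have h1 : (1:ℝ) ≤ ((G k).1 : ℝ) := by exact_mod_cast hm1 k
    nlinarith [hδpos k]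
  have hδ0 : δ (G 0) < 1 / (4 * (N₁:ℝ)) := hfabs N₁ le_rfl
  have hceilNf : ∀ k, (1 / (2 * δ (G k)) : ℝ) ≤ (Nf (G k) : ℝ) := by
    intro k
    calc (1 / (2 * δ (G k)) : ℝ) ≤ (⌈1 / (2 * δ (G k))⌉₊ : ℝ) := Nat.le_ceil _
      _ ≤ (Nf (G k) : ℝ) := by exact_mod_cast le_max_right N₁ _
  have hNfpos : ∀ k, (0:ℝ) < (Nf (G k) : ℝ) := by
    intro k
    have : (1:ℕ) ≤ Nf (G k) := le_trans hN₁pos (hNfle _)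
    exact_mod_cast this
  have hhalf : ∀ k, δ (G (k+1)) ≤ δ (G k) / 2 := by
    intro k
    have hNk := hceilNf k
    have h2 : δ (G (k+1)) < 1 / (4 * (Nf (G k) : ℝ)) := by
      rw [hGsucc k]; exact hfabs _ _
    have hdpos := hδpos k
    have h3 : 1 / (4 * (Nf (G k):ℝ)) ≤ δ (G k) / 2 := by
      rw [div_le_div_iff₀ (by positivity) (by norm_num)]
      have h4 : (1:ℝ) ≤ (2 * δ (G k)) * Nf (G k) := by
        rw [div_le_iff₀ (by positivity)] at hNk
        linarith
      nlinarith
    linarith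
  have hgeom : ∀ k, δ (G k) ≤ δ (G 0) * (1/2)^k := by
    intro k; induction k with
    | zero => simp
    | succ k ih =>
      calc δ (G (k+1)) ≤ δ (G k) / 2 := hhalf k
        _ ≤ (δ (G 0) * (1/2)^k) / 2 := by linarith
        _ = δ (G 0) * (1/2)^(k+1) := by ring
  have hNfdelta : ∀ k, (Nf (G k) : ℝ) * δ (G k) ≤ 3/4 := by
    intro k
    have hdk := hδpos k
    have hb1 : (N₁:ℝ) * δ (G k) ≤ 3/4 := by
      have hd0 : δ (G k) ≤ δ (G 0) := by
        have h5 := hgeom k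
        have h6 : δ (G 0) * (1/2)^k ≤ δ (G 0) * 1 := by
          apply mul_le_mul_of_nonneg_left _ (abs_nonneg _)
          apply pow_le_one₀ <;> norm_num
        linarith
      have hN₁pos' : (0:ℝ) < (N₁:ℝ) := by exact_mod_cast hN₁pos
      have : (N₁:ℝ) * δ (G k) < 1/4 := by
        calc (N₁:ℝ) * δ (G k) ≤ (N₁:ℝ) * δ (G 0) :=
              mul_le_mul_of_nonneg_left hd0 hN₁pos'.le
          _ < (N₁:ℝ) * (1/(4*N₁)) := mul_lt_mul_of_pos_left hδ0 hN₁pos'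
          _ = 1/4 := by field_simp
      linarith
    have hb2 : ((⌈1 / (2 * δ (G k))⌉₊ : ℝ)) * δ (G k) ≤ 3/4 := by
      have hceil : ((⌈1 / (2 * δ (G k))⌉₊ : ℝ)) ≤ 1 / (2 * δ (G k)) + 1 :=
        (Nat.ceil_lt_add_one (by positivity)).le
      have hlt := hδlt k
      calc ((⌈1 / (2 * δ (G k))⌉₊ : ℝ)) * δ (G k)
          ≤ (1 / (2 * δ (G k)) + 1) * δ (G k) :=
            mul_le_mul_of_nonneg_right hceil hdk.le
        _ = 1/2 + δ (G k) := by field_simp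
        _ ≤ 3/4 := by linarith
    rcases le_total (N₁ : ℕ) (⌈1 / (2 * δ (G k))⌉₊) with h | h
    · have : Nf (G k) = ⌈1 / (2 * δ (G k))⌉₊ := max_eq_right h
      rw [this]; exact hb2
    · have : Nf (G k) = N₁ := max_eq_left h
      rw [this]; exact hb1
  have hcross : ∀ k, (G k).2 * (G 0).1 = (G 0).2 * (G k).1 := by
    intro k; induction k with
    | zero => ring
    | succ k ih =>
      have hdet : (G k).1 * (G (k+1)).2 - (G (k+1)).1 * (G k).2 = 0 := by
        have h1 : ((G k).1 : ℝ) * δ (G (k+1)) < 1/8 := by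
          have hh := hhalf k
          have hmp := hmd k
          have hm0 : (0:ℝ) < ((G k).1:ℝ) := by exact_mod_cast hm1 k
          nlinarith [hδpos (k+1), hδpos k]
        have h2 : ((G (k+1)).1 : ℝ) * δ (G k) ≤ 3/4 := by
          have hle : ((G (k+1)).1 : ℝ) ≤ (Nf (G k) : ℝ) := by
            have : (G (k+1)).1 ≤ ((Nf (G k)) : ℤ) := by rw [hGsucc k]; exact hfle _ _
            exact_mod_cast this
          calc ((G (k+1)).1 : ℝ) * δ (G k) ≤ (Nf (G k) : ℝ) * δ (G k) :=
                mul_le_mul_of_nonneg_right hle (hδpos k).le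
            _ ≤ 3/4 := hNfdelta k
        have habs : |(((G k).1 * (G (k+1)).2 - (G (k+1)).1 * (G k).2 : ℤ) : ℝ)| < 1 := by
          have expand : (((G k).1 * (G (k+1)).2 - (G (k+1)).1 * (G k).2 : ℤ) : ℝ)
              = ((G k).1:ℝ) * (((G (k+1)).1:ℝ) * α + ((G (k+1)).2:ℝ))
                - ((G (k+1)).1:ℝ) * (((G k).1:ℝ) * α + ((G k).2:ℝ)) := by
            push_cast; ring
          rw [expand]
          have t1 : |((G k).1:ℝ) * (((G (k+1)).1:ℝ) * α + ((G (k+1)).2:ℝ))| < 1/8 := by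
            rw [abs_mul, abs_of_pos (show (0:ℝ) < ((G k).1:ℝ) by exact_mod_cast hm1 k)]
            exact h1
          have t2 : |((G (k+1)).1:ℝ) * (((G k).1:ℝ) * α + ((G k).2:ℝ))| ≤ 3/4 := by
            rw [abs_mul, abs_of_pos (show (0:ℝ) < ((G (k+1)).1:ℝ) by exact_mod_cast hm1 (k+1))]
            exact h2
          calc |((G k).1:ℝ) * (((G (k+1)).1:ℝ) * α + ((G (k+1)).2:ℝ))
              - ((G (k+1)).1:ℝ) * (((G k).1:ℝ) * α + ((G k).2:ℝ))|
              ≤ |((G k).1:ℝ) * (((G (k+1)).1:ℝ) * α + ((G (k+1)).2:ℝ))|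
                + |((G (k+1)).1:ℝ) * (((G k).1:ℝ) * α + ((G k).2:ℝ))| := abs_sub _ _
            _ < 1 := by linarith
        have hZ : |(G k).1 * (G (k+1)).2 - (G (k+1)).1 * (G k).2| < 1 := by
          exact_mod_cast habs
        exact Int.abs_lt_one_iff.mp hZ
      have hm0 : (G k).1 ≠ 0 := by have := hm1 k; omega
      have key : (G k).1 * ((G (k+1)).2 * (G 0).1) = (G k).1 * ((G 0).2 * (G (k+1)).1) := by
        have h1 : (G k).1 * (G (k+1)).2 = (G (k+1)).1 * (G k).2 := by omega
        calc (G k).1 * ((G (k+1)).2 * (G 0).1) = ((G k).1 * (G (k+1)).2) * (G 0).1 := by ring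
          _ = ((G (k+1)).1 * (G k).2) * (G 0).1 := by rw [h1]
          _ = (G (k+1)).1 * ((G k).2 * (G 0).1) := by ring
          _ = (G (k+1)).1 * ((G 0).2 * (G k).1) := by rw [ih]
          _ = (G k).1 * ((G 0).2 * (G (k+1)).1) := by ring
      exact mul_left_cancel₀ hm0 key
  set E := δ (G 0) with hE
  have hEpos : 0 < E := hδpos 0
  have hm0R : (0:ℝ) < ((G 0).1 : ℝ) := by exact_mod_cast hm1 0
  have hkey : ∀ k, E ≤ ((G 0).1 : ℝ) * (E * (1/2)^k) := by
    intro k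
    have hmkR : (1:ℝ) ≤ ((G k).1 : ℝ) := by exact_mod_cast hm1 k
    have heq : ((G 0).1 : ℝ) * (((G k).1:ℝ) * α + ((G k).2:ℝ))
        = ((G k).1 : ℝ) * (((G 0).1:ℝ) * α + ((G 0).2:ℝ)) := by
      have hc' : ((G k).2 : ℝ) * ((G 0).1:ℝ) = ((G 0).2:ℝ) * ((G k).1:ℝ) := by
        exact_mod_cast hcross k
      linear_combination hc'
    have habs : ((G 0).1 : ℝ) * δ (G k) = ((G k).1 : ℝ) * E := by
      have h := congrArg abs heq
      rwa [abs_mul, abs_mul, abs_of_pos hm0R,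
        abs_of_pos (show (0:ℝ) < ((G k).1:ℝ) by linarith)] at h
    calc E ≤ ((G k).1 : ℝ) * E := le_mul_of_one_le_left hEpos.le hmkR
      _ = ((G 0).1 : ℝ) * δ (G k) := habs.symm
      _ ≤ ((G 0).1 : ℝ) * (E * (1/2)^k) := by
          apply mul_le_mul_of_nonneg_left _ hm0R.le
          exact hgeom k
  obtain ⟨k, hk⟩ := exists_pow_lt_of_lt_one
    (show (0:ℝ) < 1/((G 0).1:ℝ) by positivity) (by norm_num : (1/2:ℝ) < 1)
  have hfin := hkey k
  have h1 : ((G 0).1:ℝ) * (1/2)^k < 1 := by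
    rw [lt_div_iff₀ hm0R] at hk
    linarith [hk]
  nlinarith [hEpos, h1, hfin]

lemma slab_vol (d : ℕ) (b : Fin d → ℝ) (j : Fin d) (hbj : b j ≠ 0) (t ε R : ℝ)
    (hε : 0 ≤ ε) (hR : 0 ≤ R) :
    volume {x : Fin d → ℝ | (∀ i, |x i| ≤ R) ∧ |(∑ i, b i * x i) + t| < ε}
      ≤ ENNReal.ofReal (|b j|⁻¹ * (2*ε) * (2*R)^(d-1)) := by
  classical
  set M : Matrix (Fin d) (Fin d) ℝ := Matrix.updateRow 1 j b with hM
  have hMeq : M = 1 + Matrix.replicateCol Unit (Pi.single j (1:ℝ)) *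
      Matrix.replicateRow Unit (b - Pi.single j (1:ℝ)) := by
    ext i k
    simp only [hM, Matrix.add_apply, Matrix.mul_apply, Matrix.replicateCol_apply, Matrix.replicateRow_apply,
      Finset.univ_unique, Finset.sum_singleton, Pi.sub_apply]
    by_cases hij : i = j
    · subst hij
      rw [Matrix.updateRow_self]
      simp only [Matrix.one_apply, Pi.single_apply]
      by_cases hk : i = k
      · subst hk; simp
      · have hk' : ¬ (k = i) := fun h => hk h.symm
        simp [hk, hk']
    · rw [Matrix.updateRow_ne hij]
      simp [Pi.single_apply, hij]
  have hdet : M.det = b j := by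
    rw [hMeq, Matrix.det_one_add_replicateCol_mul_replicateRow]
    simp [dotProduct, Pi.single_apply]
  set f : (Fin d → ℝ) →ₗ[ℝ] (Fin d → ℝ) := Matrix.toLin' M with hf
  have hfdet : LinearMap.det f = b j := by
    rw [hf, LinearMap.det_toLin']; exact hdet
  set S : Set (Fin d → ℝ) :=
    Set.univ.pi fun i => if i = j then Set.Ioo (-t-ε) (-t+ε) else Set.Icc (-R) R with hS
  have hsub : {x : Fin d → ℝ | (∀ i, |x i| ≤ R) ∧ |(∑ i, b i * x i) + t| < ε} ⊆ f ⁻¹' S := by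
    intro x ⟨hbox, hslab⟩
    intro i _
    dsimp only
    have hfx : f x i = ∑ k, M i k * x k := by
      rw [hf, Matrix.toLin'_apply]
      rfl
    by_cases hij : i = j
    · subst hij
      rw [if_pos rfl]
      have : f x i = ∑ k, b k * x k := by
        rw [hfx]; congr 1; ext k; rw [hM, Matrix.updateRow_self]
      rw [this]
      rw [abs_lt] at hslab
      constructor <;> [linarith [hslab.1]; linarith [hslab.2]]
    · rw [if_neg hij]
      have : f x i = x i := by
        rw [hfx, hM]
        simp [Matrix.updateRow_ne hij, Matrix.one_apply, ite_mul, Finset.sum_ite_eq]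
      rw [this, Set.mem_Icc]
      have := hbox i
      rw [abs_le] at this
      exact this
  have hSvol : volume S = ENNReal.ofReal (2*ε) * (ENNReal.ofReal (2*R))^(d-1) := by
    rw [hS, volume_pi_pi]
    rw [← Finset.mul_prod_erase Finset.univ _ (Finset.mem_univ j)]
    rw [if_pos rfl, Real.volume_Ioo]
    have h1 : -t + ε - (-t - ε) = 2*ε := by ring
    rw [h1]
    congr 1
    have h2 : ∀ i ∈ Finset.univ.erase j,
        volume (if i = j then Set.Ioo (-t-ε) (-t+ε) else Set.Icc (-R) R)
          = ENNReal.ofReal (2*R) := by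
      intro i hi
      rw [if_neg (Finset.ne_of_mem_erase hi), Real.volume_Icc]
      congr 1; ring
    rw [Finset.prod_congr rfl h2, Finset.prod_const, Finset.card_erase_of_mem (Finset.mem_univ j),
      Finset.card_univ, Fintype.card_fin]
  calc volume {x : Fin d → ℝ | (∀ i, |x i| ≤ R) ∧ |(∑ i, b i * x i) + t| < ε}
      ≤ volume (f ⁻¹' S) := measure_mono hsub
    _ = ENNReal.ofReal |(LinearMap.det f)⁻¹| * volume S := by
        rw [MeasureTheory.Measure.addHaar_preimage_linearMap volume (by rw [hfdet]; exact hbj)]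
    _ ≤ ENNReal.ofReal (|b j|⁻¹ * (2*ε) * (2*R)^(d-1)) := by
        rw [hSvol, hfdet, abs_inv]
        rw [← ENNReal.ofReal_pow (by linarith), ← ENNReal.ofReal_mul (by positivity),
          ← ENNReal.ofReal_mul (by positivity)]
        exact le_of_eq (by ring_nf)

lemma sum_snoc_eq (d : ℕ) (a : Fin (d+1) → ℝ) (q : Fin (d+1) → ℤ) (q₀ : ℤ) (x : Fin d → ℝ) :
    (∑ i, (q i : ℝ) * (Fin.snoc x (a 0 + ∑ i : Fin d, a i.succ * x i) : Fin (d+1) → ℝ) i)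
        + (q₀ : ℝ)
    = (∑ i : Fin d, ((q i.castSucc : ℝ) + (q (Fin.last d) : ℝ) * a i.succ) * x i)
      + ((q (Fin.last d) : ℝ) * a 0 + q₀) := by
  rw [Fin.sum_univ_castSucc]
  simp only [Fin.snoc_castSucc, Fin.snoc_last]
  have h : ∀ i : Fin d, ((q i.castSucc : ℝ) + (q (Fin.last d) : ℝ) * a i.succ) * x i
      = (q i.castSucc : ℝ) * x i + (q (Fin.last d) : ℝ) * (a i.succ * x i) := fun i => by ring
  rw [Finset.sum_congr rfl (fun i _ => h i), Finset.sum_add_distrib, mul_add, Finset.mul_sum]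
  ring

lemma rational_singular (d : ℕ) (a : Fin (d+1) → ℝ) (r : Fin (d+1) → ℚ)
    (ha : ∀ i, a i = (r i : ℝ)) (x : Fin d → ℝ) :
    IsSingularVec (Fin.snoc x (a 0 + ∑ i : Fin d, a i.succ * x i)) := by
  intro c hc
  set D : ℕ := ∏ i, (r i).den with hD
  have hDpos : 0 < D := Finset.prod_pos (fun i _ => (r i).pos)
  have hz : ∀ i, ∃ z : ℤ, (a i : ℝ) * D = z := by
    intro i
    have hdvd : (r i).den ∣ D := Finset.dvd_prod_of_mem _ (Finset.mem_univ i)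
    obtain ⟨k, hk⟩ := hdvd
    refine ⟨(r i).num * k, ?_⟩
    rw [ha i, Rat.cast_def]
    have hden : ((r i).den : ℝ) ≠ 0 := by
      exact_mod_cast (r i).den_nz
    push_cast [hk]
    field_simp
  choose z hzeq using hz
  set q : Fin (d+1) → ℤ := Fin.snoc (fun i : Fin d => -(z i.succ)) (D : ℤ) with hq
  have hqcast : ∀ i : Fin d, q i.castSucc = -(z i.succ) := by
    intro i; rw [hq, Fin.snoc_castSucc]
  have hqlast : q (Fin.last d) = (D:ℤ) := by rw [hq, Fin.snoc_last]
  refine ⟨1 + ∑ i, |(q i : ℝ)|, by positivity, fun Q hQ => ⟨q, ?_, -(z 0), ?_, ?_⟩⟩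
  · intro h
    have : q (Fin.last d) = 0 := by rw [h]; rfl
    rw [hqlast] at this
    omega
  · have hzero : (∑ i, (q i : ℝ) * (Fin.snoc x (a 0 + ∑ i : Fin d, a i.succ * x i) : Fin (d+1) → ℝ) i)
        + ((-(z 0) : ℤ) : ℝ) = 0 := by
      rw [sum_snoc_eq]
      have hcoef : ∀ i : Fin d, ((q i.castSucc : ℝ) + (q (Fin.last d) : ℝ) * a i.succ) = 0 := by
        intro i
        rw [hqcast i, hqlast]
        have := hzeq i.succ
        push_cast
        linarith [this]
      have hsum0 : (∑ i : Fin d, ((q i.castSucc : ℝ) + (q (Fin.last d) : ℝ) * a i.succ) * x i) = 0 := by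
        apply Finset.sum_eq_zero
        intro i _
        rw [hcoef i, zero_mul]
      rw [hsum0]
      rw [hqlast]
      have := hzeq 0
      push_cast
      linarith [this]
    have hQpos : (0:ℝ) < Q := lt_of_lt_of_le (by positivity) hQ
    rw [hzero, abs_zero]
    positivity
  · intro i
    have h1 : |(q i : ℝ)| ≤ ∑ j, |(q j : ℝ)| :=
      Finset.single_le_sum (f := fun j => |(q j : ℝ)|) (fun j _ => abs_nonneg _) (Finset.mem_univ i)
    linarith

lemma Wq_le (d : ℕ) (R ε : ℝ) (hR : 1 ≤ R) (hε : 0 < ε) (b : Fin d → ℝ) (T0 : ℝ)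
    (F0 : Finset ℤ) (β γ : ℝ) (hβ : ∀ i, |b i| ≤ β) (j : Fin d) (hγ : 0 < γ)
    (hγj : γ ≤ |b j|) :
    ∑ q₀ ∈ F0, volume {x : Fin d → ℝ | (∀ i, |x i| ≤ R) ∧
        |(∑ i, b i * x i) + (T0 + (q₀:ℝ))| < ε}
      ≤ ENNReal.ofReal ((2*((d:ℝ)*R*β + ε) + 1) * (γ⁻¹ * (2*ε) * (2*R)^(d-1))) := by
  classical
  set L : ℝ := (d:ℝ)*R*β + ε with hL
  have hβ0 : 0 ≤ β := le_trans (abs_nonneg _) (hβ j)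
  have hL0 : 0 < L := by
    have : (0:ℝ) ≤ (d:ℝ)*R*β := by positivity
    linarith
  set lo : ℤ := ⌈-T0 - L⌉ with hlo
  set hi : ℤ := ⌊-T0 + L⌋ with hhi
  have hbj : b j ≠ 0 := by
    intro h; rw [h, abs_zero] at hγj; linarith
  set slabB : ℝ := γ⁻¹ * (2*ε) * (2*R)^(d-1) with hslabB
  have hslabB0 : 0 ≤ slabB := by positivity
  set f : ℤ → ℝ≥0∞ := fun q₀ => volume {x : Fin d → ℝ | (∀ i, |x i| ≤ R) ∧
      |(∑ i, b i * x i) + (T0 + (q₀:ℝ))| < ε} with hf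
  have hone : ∀ q₀ : ℤ, f q₀ ≤ ENNReal.ofReal slabB := by
    intro q₀
    refine le_trans (slab_vol d b j hbj (T0+(q₀:ℝ)) ε R hε.le (by linarith)) ?_
    apply ENNReal.ofReal_le_ofReal
    have h1 : |b j|⁻¹ ≤ γ⁻¹ := by
      apply inv_anti₀ hγ hγj
    apply mul_le_mul_of_nonneg_right
      (mul_le_mul_of_nonneg_right h1 (by linarith)) (by positivity)
  have hfilter : ∑ q₀ ∈ F0, f q₀
      = ∑ q₀ ∈ F0.filter (fun q₀ : ℤ => ({x : Fin d → ℝ | (∀ i, |x i| ≤ R) ∧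
          |(∑ i, b i * x i) + (T0 + (q₀:ℝ))| < ε}).Nonempty), f q₀ := by
    symm
    apply Finset.sum_filter_of_ne
    intro q₀ _ hne
    by_contra hempty
    apply hne
    rw [hf]
    simp only
    rw [Set.not_nonempty_iff_eq_empty.mp hempty]
    exact measure_empty
  have hsubIcc : F0.filter (fun q₀ : ℤ => ({x : Fin d → ℝ | (∀ i, |x i| ≤ R) ∧
      |(∑ i, b i * x i) + (T0 + (q₀:ℝ))| < ε}).Nonempty) ⊆ Finset.Icc lo hi := by
    intro q₀ hq₀
    rw [Finset.mem_filter] at hq₀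
    obtain ⟨x, hbox, habs⟩ := hq₀.2
    have hsumabs : |∑ i, b i * x i| ≤ (d:ℝ)*R*β := by
      calc |∑ i, b i * x i| ≤ ∑ i, |b i * x i| := Finset.abs_sum_le_sum_abs _ _
        _ ≤ ∑ _i : Fin d, β * R := by
            apply Finset.sum_le_sum
            intro i _
            rw [abs_mul]
            exact mul_le_mul (hβ i) (hbox i) (abs_nonneg _) hβ0
        _ = (d:ℝ)*R*β := by
            rw [Finset.sum_const, Finset.card_univ, Fintype.card_fin, nsmul_eq_mul]
            ring
    have hq0T : |(q₀:ℝ) + T0| ≤ L := by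
      have h2 : |(q₀:ℝ) + T0| ≤ |(∑ i, b i * x i) + (T0 + (q₀:ℝ))| + |∑ i, b i * x i| := by
        have : (q₀:ℝ) + T0 = ((∑ i, b i * x i) + (T0 + (q₀:ℝ))) - (∑ i, b i * x i) := by ring
        rw [this]
        exact abs_sub _ _
      rw [hL]
      linarith [habs, hsumabs, h2]
    rw [Finset.mem_Icc]
    rw [abs_le] at hq0T
    constructor
    · rw [hlo, Int.ceil_le]
      push_cast
      linarith [hq0T.1]
    · rw [hhi, Int.le_floor]
      push_cast
      linarith [hq0T.2]
  calc ∑ q₀ ∈ F0, f q₀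
      = ∑ q₀ ∈ F0.filter _, f q₀ := hfilter
    _ ≤ (F0.filter _).card • ENNReal.ofReal slabB :=
        Finset.sum_le_card_nsmul _ _ _ (fun q₀ _ => hone q₀)
    _ ≤ (Finset.Icc lo hi).card • ENNReal.ofReal slabB := by
        rw [nsmul_eq_mul, nsmul_eq_mul]
        exact mul_le_mul_left (Nat.cast_le.mpr (Finset.card_le_card hsubIcc)) _
    _ ≤ ENNReal.ofReal ((2*L + 1) * slabB) := by
        rw [nsmul_eq_mul]
        have hcard : ((Finset.Icc lo hi).card : ℝ) ≤ 2*L + 1 := by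
          have hfl : (hi:ℝ) ≤ -T0 + L := Int.floor_le _
          have hce : -T0 - L ≤ (lo:ℝ) := Int.le_ceil _
          rw [Int.card_Icc]
          rcases le_or_gt (hi + 1 - lo) 0 with h | h
          · rw [Int.toNat_of_nonpos h]
            norm_num
            linarith
          · have hcast : (((hi + 1 - lo).toNat : ℤ) : ℝ) = ((hi + 1 - lo : ℤ) : ℝ) := by
              rw [Int.toNat_of_nonneg h.le]
            push_cast at hcast ⊢
            rw [hcast]
            linarith
        calc ((Finset.Icc lo hi).card : ℝ≥0∞) * ENNReal.ofReal slabB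
            = ENNReal.ofReal ((Finset.Icc lo hi).card : ℝ) * ENNReal.ofReal slabB := by
              rw [ENNReal.ofReal_natCast]
          _ = ENNReal.ofReal (((Finset.Icc lo hi).card : ℝ) * slabB) := by
              rw [ENNReal.ofReal_mul (Nat.cast_nonneg _)]
          _ ≤ _ := ENNReal.ofReal_le_ofReal (mul_le_mul_of_nonneg_right hcard hslabB0)

def bb (d : ℕ) (a : Fin (d+1) → ℝ) (q : Fin (d+1) → ℤ) : Fin d → ℝ :=
  fun i => (q i.castSucc : ℝ) + (q (Fin.last d) : ℝ) * a i.succ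

def slabSet (d : ℕ) (a : Fin (d+1) → ℝ) (R ε : ℝ) (q : Fin (d+1) → ℤ) (q₀ : ℤ) :
    Set (Fin d → ℝ) :=
  {x : Fin d → ℝ | (∀ i, |x i| ≤ R) ∧
    |(∑ i, bb d a q i * x i) + (((q (Fin.last d) : ℝ) * a 0) + (q₀:ℝ))| < ε}

noncomputable def Mz (d : ℕ) (a : Fin (d+1) → ℝ) (R : ℝ) (N : ℕ) : ℤ :=
  1 + (d+1) * N * ⌈R * (|a 0| + (∑ i : Fin d, |a i.succ|) + 1)⌉

lemma nsmul_ofReal_le (k : ℕ) (x K y : ℝ) (hk : (k:ℝ) ≤ K) (hx : 0 ≤ x) (hxy : x ≤ y) :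
    k • ENNReal.ofReal x ≤ ENNReal.ofReal (K * y) := by
  rw [nsmul_eq_mul]
  calc (k : ℝ≥0∞) * ENNReal.ofReal x = ENNReal.ofReal ((k:ℝ) * x) := by
        rw [ENNReal.ofReal_mul (Nat.cast_nonneg _), ENNReal.ofReal_natCast]
    _ ≤ ENNReal.ofReal (K * y) := ENNReal.ofReal_le_ofReal
        (mul_le_mul hk hxy hx (le_trans (Nat.cast_nonneg k) hk))

lemma cover_bound (d : ℕ) (a : Fin (d+1) → ℝ) (R c : ℝ) (hR : 1 ≤ R) (hc : 0 < c)
    (hc8 : c < 1/8) (N : ℕ) (hN1 : 1 ≤ N) (V2 : ℝ)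
    (Hlow : ∀ q : Fin (d+1) → ℤ, q ≠ 0 → (∀ i, q i ∈ Finset.Icc (-(N:ℤ)) N) →
      (∀ i : Fin d, |bb d a q i| < 1/2) →
      ∑ q₀ ∈ Finset.Icc (-(Mz d a R N)) (Mz d a R N),
        volume (slabSet d a R (c/(N:ℝ)^(d+1)) q q₀) ≤ ENNReal.ofReal V2)
    (hV2 : 0 ≤ V2) :
    volume {x : Fin d → ℝ | (∀ i, |x i| ≤ R) ∧
        ∃ q : Fin (d+1) → ℤ, q ≠ 0 ∧ (∀ i, |(q i : ℝ)| ≤ (N:ℝ)) ∧ ∃ q₀ : ℤ,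
          |(∑ i, (q i : ℝ) * (Fin.snoc x (a 0 + ∑ i : Fin d, a i.succ * x i) : Fin (d+1) → ℝ) i)
            + (q₀:ℝ)| < c / (N:ℝ)^(d+1)}
      ≤ ENNReal.ofReal (((2*(N:ℝ)+1)^(d+1)) * ((2*(d:ℝ)*R+3) * (2*(c/(N:ℝ)^(d+1))) * (2*R)^(d-1))
          + (2*(N:ℝ)+1) * V2) := by
  classical
  set ε : ℝ := c / (N:ℝ)^(d+1) with hεdef
  have hNpos : (0:ℝ) < N := by exact_mod_cast hN1
  have hNpow : (1:ℝ) ≤ (N:ℝ)^(d+1) := one_le_pow₀ (by exact_mod_cast hN1)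
  have hε0 : 0 < ε := by positivity
  have hεc : ε ≤ c := by
    rw [hεdef, div_le_iff₀ (by positivity)]
    nlinarith
  have hε8 : ε ≤ 1/8 := by linarith
  set A : ℝ := |a 0| + (∑ i : Fin d, |a i.succ|) + 1 with hA
  have hA1 : 1 ≤ A := by
    have h1 : (0:ℝ) ≤ |a 0| := abs_nonneg _
    have h2 : (0:ℝ) ≤ ∑ i : Fin d, |a i.succ| :=
      Finset.sum_nonneg fun i _ => abs_nonneg _
    rw [hA]; linarith
  set M : ℤ := Mz d a R N with hM
  have hMbound : 1 + ((d:ℝ)+1) * N * (R*A) ≤ (M:ℝ) := by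
    rw [hM, Mz]
    push_cast
    have h1 : R * A ≤ (⌈R * (|a 0| + (∑ i : Fin d, |a i.succ|) + 1)⌉ : ℝ) := by
      rw [hA]; exact Int.le_ceil _
    have h2 : (0:ℝ) ≤ ((d:ℝ)+1) * N := by positivity
    nlinarith
  set F : Finset (Fin (d+1) → ℤ) :=
    (Fintype.piFinset fun _ : Fin (d+1) => Finset.Icc (-(N:ℤ)) N).filter (fun q => q ≠ 0)
    with hF
  set F0 : Finset ℤ := Finset.Icc (-M) M with hF0
  -- covering
  have hcover : {x : Fin d → ℝ | (∀ i, |x i| ≤ R) ∧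
      ∃ q : Fin (d+1) → ℤ, q ≠ 0 ∧ (∀ i, |(q i : ℝ)| ≤ (N:ℝ)) ∧ ∃ q₀ : ℤ,
        |(∑ i, (q i : ℝ) * (Fin.snoc x (a 0 + ∑ i : Fin d, a i.succ * x i) : Fin (d+1) → ℝ) i)
          + (q₀:ℝ)| < ε}
      ⊆ ⋃ q ∈ F, ⋃ q₀ ∈ F0, slabSet d a R ε q q₀ := by
    rintro x ⟨hbox, q, hq0, hqle, q₀, habs⟩
    have habs' : |(∑ i : Fin d, bb d a q i * x i)
        + (((q (Fin.last d) : ℝ) * a 0) + (q₀:ℝ))| < ε := by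
      simp only [bb]
      rw [← sum_snoc_eq d a q q₀ x]
      exact habs
    have hqmem : ∀ i, q i ∈ Finset.Icc (-(N:ℤ)) N := by
      intro i
      have h1 : |(q i : ℝ)| ≤ (N:ℝ) := hqle i
      rw [← Int.cast_abs] at h1
      have h2 : |q i| ≤ (N:ℤ) := by exact_mod_cast h1
      rw [Finset.mem_Icc]
      exact abs_le.mp h2
    have hvbound : ∀ i : Fin (d+1),
        |(Fin.snoc x (a 0 + ∑ i : Fin d, a i.succ * x i) : Fin (d+1) → ℝ) i| ≤ R * A := by
      intro i
      induction i using Fin.lastCases with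
      | last =>
        rw [Fin.snoc_last]
        have h1 : |a 0 + ∑ i : Fin d, a i.succ * x i|
            ≤ |a 0| + ∑ i : Fin d, |a i.succ| * R := by
          calc |a 0 + ∑ i : Fin d, a i.succ * x i|
              ≤ |a 0| + |∑ i : Fin d, a i.succ * x i| := abs_add_le _ _
            _ ≤ |a 0| + ∑ i : Fin d, |a i.succ * x i| := by
                linarith [Finset.abs_sum_le_sum_abs (fun i : Fin d => a i.succ * x i)
                  Finset.univ]
            _ ≤ |a 0| + ∑ i : Fin d, |a i.succ| * R := by
                have h6 : ∀ i : Fin d, |a i.succ * x i| ≤ |a i.succ| * R := by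
                  intro i
                  rw [abs_mul]
                  exact mul_le_mul_of_nonneg_left (hbox i) (abs_nonneg _)
                linarith [Finset.sum_le_sum (fun i (_ : i ∈ Finset.univ) => h6 i)]
        have h2 : |a 0| + ∑ i : Fin d, |a i.succ| * R ≤ R * A := by
          rw [hA]
          have h3 : ∑ i : Fin d, |a i.succ| * R = (∑ i : Fin d, |a i.succ|) * R :=
            (Finset.sum_mul _ _ _).symm
          have h4 : (0:ℝ) ≤ ∑ i : Fin d, |a i.succ| :=
            Finset.sum_nonneg fun i _ => abs_nonneg _
          have h5 : (0:ℝ) ≤ |a 0| := abs_nonneg _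
          nlinarith
        linarith
      | cast j =>
        rw [Fin.snoc_castSucc]
        calc |x j| ≤ R := hbox j
          _ ≤ R * A := le_mul_of_one_le_right (by linarith) hA1
    have hq₀mem : q₀ ∈ F0 := by
      have h1 : |(q₀:ℝ)| ≤ ε + ∑ i : Fin (d+1), (N:ℝ) * (R*A) := by
        have h2 : |(q₀:ℝ)| ≤ |(∑ i, (q i : ℝ) *
            (Fin.snoc x (a 0 + ∑ i : Fin d, a i.succ * x i) : Fin (d+1) → ℝ) i) + (q₀:ℝ)|
            + |∑ i, (q i : ℝ) *
            (Fin.snoc x (a 0 + ∑ i : Fin d, a i.succ * x i) : Fin (d+1) → ℝ) i| := by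
          have h2' := abs_sub ((∑ i, (q i : ℝ) *
              (Fin.snoc x (a 0 + ∑ i : Fin d, a i.succ * x i) : Fin (d+1) → ℝ) i) + (q₀:ℝ))
              (∑ i, (q i : ℝ) *
              (Fin.snoc x (a 0 + ∑ i : Fin d, a i.succ * x i) : Fin (d+1) → ℝ) i)
          have heq : ((∑ i, (q i : ℝ) *
              (Fin.snoc x (a 0 + ∑ i : Fin d, a i.succ * x i) : Fin (d+1) → ℝ) i) + (q₀:ℝ))
              - (∑ i, (q i : ℝ) *
              (Fin.snoc x (a 0 + ∑ i : Fin d, a i.succ * x i) : Fin (d+1) → ℝ) i) = (q₀:ℝ) := by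
            ring
          rw [heq] at h2'
          exact h2'
        have h3 : |∑ i, (q i : ℝ) *
            (Fin.snoc x (a 0 + ∑ i : Fin d, a i.succ * x i) : Fin (d+1) → ℝ) i|
            ≤ ∑ i : Fin (d+1), (N:ℝ) * (R*A) := by
          calc |∑ i, (q i : ℝ) *
              (Fin.snoc x (a 0 + ∑ i : Fin d, a i.succ * x i) : Fin (d+1) → ℝ) i|
              ≤ ∑ i : Fin (d+1), |(q i : ℝ) *
                (Fin.snoc x (a 0 + ∑ i : Fin d, a i.succ * x i) : Fin (d+1) → ℝ) i| :=
                Finset.abs_sum_le_sum_abs _ _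
            _ ≤ ∑ i : Fin (d+1), (N:ℝ) * (R*A) := by
                apply Finset.sum_le_sum
                intro i _
                rw [abs_mul]
                apply mul_le_mul (hqle i) (hvbound i) (abs_nonneg _) hNpos.le
        linarith [habs, h2, h3]
      have h4 : |(q₀:ℝ)| ≤ (M:ℝ) := by
        have h5 : ∑ i : Fin (d+1), (N:ℝ) * (R*A) = ((d:ℝ)+1) * ((N:ℝ) * (R*A)) := by
          rw [Finset.sum_const, Finset.card_univ, Fintype.card_fin, nsmul_eq_mul]
          push_cast; ring
        have hε1 : ε ≤ 1 := by linarith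
        rw [h5] at h1
        calc |(q₀:ℝ)| ≤ ε + ((d:ℝ)+1) * ((N:ℝ) * (R*A)) := h1
          _ ≤ 1 + ((d:ℝ)+1) * N * (R*A) := by nlinarith
          _ ≤ (M:ℝ) := hMbound
      rw [hF0, Finset.mem_Icc]
      rw [← Int.cast_abs] at h4
      have h6 : |q₀| ≤ M := by exact_mod_cast h4
      exact abs_le.mp h6
    have hqF : q ∈ F := by
      rw [hF, Finset.mem_filter]
      exact ⟨Fintype.mem_piFinset.mpr hqmem, hq0⟩
    exact Set.mem_biUnion hqF (Set.mem_biUnion hq₀mem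
      (show x ∈ slabSet d a R ε q q₀ from ⟨hbox, habs'⟩))
  refine le_trans (measure_mono hcover) ?_
  refine le_trans (measure_biUnion_finset_le F _) ?_
  have hWsum : ∀ q ∈ F, volume (⋃ q₀ ∈ F0, slabSet d a R ε q q₀)
      ≤ ∑ q₀ ∈ F0, volume (slabSet d a R ε q q₀) :=
    fun q _ => measure_biUnion_finset_le F0 _
  refine le_trans (Finset.sum_le_sum hWsum) ?_
  -- split by regimes
  set P1 : (Fin (d+1) → ℤ) → Prop := fun q => ∃ i : Fin d, (1:ℝ)/2 ≤ |bb d a q i| with hP1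
  rw [← Finset.sum_filter_add_sum_filter_not F P1]
  -- regime 1
  have hreg1 : ∀ q ∈ F.filter P1, ∑ q₀ ∈ F0, volume (slabSet d a R ε q q₀)
      ≤ ENNReal.ofReal ((2*(d:ℝ)*R+3) * (2*ε) * (2*R)^(d-1)) := by
    intro q hq
    rw [Finset.mem_filter] at hq
    obtain ⟨i₀, hi₀⟩ := hq.2
    obtain ⟨j, -, hj⟩ := Finset.exists_max_image Finset.univ (fun i => |bb d a q i|)
      ⟨i₀, Finset.mem_univ _⟩
    have hβ : ∀ i, |bb d a q i| ≤ |bb d a q j| := fun i => hj i (Finset.mem_univ i)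
    have h12 : 1/2 ≤ |bb d a q j| := le_trans hi₀ (hβ i₀)
    have hγ : (0:ℝ) < |bb d a q j| := lt_of_lt_of_le (by norm_num) h12
    refine le_trans (Wq_le d R ε hR hε0 (bb d a q) ((q (Fin.last d) : ℝ) * a 0) F0
      (|bb d a q j|) (|bb d a q j|) hβ j hγ le_rfl) ?_
    apply ENNReal.ofReal_le_ofReal
    have hkey : (2*((d:ℝ)*R*(|bb d a q j|) + ε) + 1) * (|bb d a q j|)⁻¹ ≤ 2*(d:ℝ)*R+3 := by
      rw [← div_eq_mul_inv, div_le_iff₀ hγ]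
      have hdR : (0:ℝ) ≤ (d:ℝ)*R := by positivity
      nlinarith
    calc (2*((d:ℝ)*R*(|bb d a q j|) + ε) + 1) * ((|bb d a q j|)⁻¹ * (2*ε) * (2*R)^(d-1))
        = ((2*((d:ℝ)*R*(|bb d a q j|) + ε) + 1) * (|bb d a q j|)⁻¹) * ((2*ε) * (2*R)^(d-1)) := by
          ring
      _ ≤ (2*(d:ℝ)*R+3) * ((2*ε) * (2*R)^(d-1)) := by
          apply mul_le_mul_of_nonneg_right hkey (by positivity)
      _ = (2*(d:ℝ)*R+3) * (2*ε) * (2*R)^(d-1) := by ring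
  have hsum1 : ∑ q ∈ F.filter P1, ∑ q₀ ∈ F0, volume (slabSet d a R ε q q₀)
      ≤ ENNReal.ofReal ((2*(N:ℝ)+1)^(d+1) * ((2*(d:ℝ)*R+3) * (2*ε) * (2*R)^(d-1))) := by
    refine le_trans (Finset.sum_le_card_nsmul _ _ _ hreg1) ?_
    apply nsmul_ofReal_le _ _ _ _ ?_ (by positivity) le_rfl
    have h1 : (F.filter P1).card ≤ (2*N+1)^(d+1) := by
      refine le_trans (Finset.card_filter_le _ _) ?_
      rw [hF]
      refine le_trans (Finset.card_filter_le _ _) ?_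
      rw [Fintype.card_piFinset]
      have h3 : (Finset.Icc (-(N:ℤ)) N).card = 2*N+1 := by
        rw [Int.card_Icc]; omega
      simp only [h3]
      rw [Finset.prod_const, Finset.card_univ, Fintype.card_fin]
    calc ((F.filter P1).card : ℝ) ≤ (((2*N+1)^(d+1) : ℕ) : ℝ) := by exact_mod_cast h1
      _ = (2*(N:ℝ)+1)^(d+1) := by push_cast; ring
  -- regime 2
  have hreg2 : ∀ q ∈ F.filter (fun q => ¬ P1 q),
      ∑ q₀ ∈ F0, volume (slabSet d a R ε q q₀) ≤ ENNReal.ofReal V2 := by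
    intro q hq
    rw [Finset.mem_filter] at hq
    obtain ⟨hqF, hnp⟩ := hq
    rw [hF, Finset.mem_filter] at hqF
    have hmem := Fintype.mem_piFinset.mp hqF.1
    have hlt : ∀ i : Fin d, |bb d a q i| < 1/2 := by
      intro i
      by_contra h
      exact hnp ⟨i, le_of_not_gt h⟩
    exact Hlow q hqF.2 hmem hlt
  have hsum2 : ∑ q ∈ F.filter (fun q => ¬ P1 q), ∑ q₀ ∈ F0, volume (slabSet d a R ε q q₀)
      ≤ ENNReal.ofReal ((2*(N:ℝ)+1) * V2) := by
    refine le_trans (Finset.sum_le_card_nsmul _ _ _ hreg2) ?_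
    apply nsmul_ofReal_le _ _ _ _ ?_ hV2 le_rfl
    have hcard2 : (F.filter (fun q => ¬ P1 q)).card ≤ 2*N+1 := by
      have hmapsto : ∀ q ∈ F.filter (fun q => ¬ P1 q),
          q (Fin.last d) ∈ Finset.Icc (-(N:ℤ)) N := by
        intro q hq
        rw [Finset.mem_filter] at hq
        have hqF := hq.1
        rw [hF, Finset.mem_filter] at hqF
        exact Fintype.mem_piFinset.mp hqF.1 _
      have hinj : Set.InjOn (fun q : Fin (d+1) → ℤ => q (Fin.last d))
          ↑(F.filter (fun q => ¬ P1 q)) := by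
        intro q1 h1 q2 h2 heq
        simp only [Finset.coe_filter, Set.mem_setOf_eq] at h1 h2
        have hl1 : ∀ i : Fin d, |bb d a q1 i| < 1/2 := by
          intro i; by_contra h; exact h1.2 ⟨i, le_of_not_gt h⟩
        have hl2 : ∀ i : Fin d, |bb d a q2 i| < 1/2 := by
          intro i; by_contra h; exact h2.2 ⟨i, le_of_not_gt h⟩
        have hlast : q1 (Fin.last d) = q2 (Fin.last d) := heq
        funext i
        induction i using Fin.lastCases with
        | last => exact hlast
        | cast j =>
          have hdiff : ((q1 j.castSucc : ℝ)) - (q2 j.castSucc : ℝ)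
              = bb d a q1 j - bb d a q2 j := by
            simp only [bb]
            rw [hlast]
            ring
          have habs1 : |(q1 j.castSucc : ℝ) - (q2 j.castSucc : ℝ)| < 1 := by
            rw [hdiff]
            calc |bb d a q1 j - bb d a q2 j| ≤ |bb d a q1 j| + |bb d a q2 j| := abs_sub _ _
              _ < 1 := by linarith [hl1 j, hl2 j]
          have habs2 : |q1 j.castSucc - q2 j.castSucc| < 1 := by
            have : |((q1 j.castSucc - q2 j.castSucc : ℤ) : ℝ)| < 1 := by
              push_cast
              exact habs1
            exact_mod_cast this
          exact sub_eq_zero.mp (Int.abs_lt_one_iff.mp habs2)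
      have := Finset.card_le_card_of_injOn (fun q : Fin (d+1) → ℤ => q (Fin.last d))
        hmapsto hinj
      calc (F.filter (fun q => ¬ P1 q)).card ≤ (Finset.Icc (-(N:ℤ)) N).card := this
        _ = 2*N+1 := by rw [Int.card_Icc]; omega
    calc ((F.filter (fun q => ¬ P1 q)).card : ℝ) ≤ ((2*N+1 : ℕ) : ℝ) := by exact_mod_cast hcard2
      _ = 2*(N:ℝ)+1 := by push_cast; ring
  refine le_trans (add_le_add hsum1 hsum2) ?_
  rw [← ENNReal.ofReal_add (by positivity) (by positivity)]

lemma qzero_of_small (d : ℕ) (a : Fin (d+1) → ℝ) (q : Fin (d+1) → ℤ)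
    (hlast : q (Fin.last d) = 0) (hlt : ∀ i : Fin d, |bb d a q i| < 1/2) : q = 0 := by
  funext i
  induction i using Fin.lastCases with
  | last => simpa using hlast
  | cast j =>
    have h1 := hlt j
    have h2 : bb d a q j = (q j.castSucc : ℝ) := by
      simp only [bb, hlast]
      push_cast
      ring
    rw [h2] at h1
    have h3 : |q j.castSucc| < 1 := by
      have h4 : |((q j.castSucc : ℤ) : ℝ)| < 1 := by push_cast; linarith
      exact_mod_cast h4
    simpa using Int.abs_lt_one_iff.mp h3

lemma main_estimate (d : ℕ) (a : Fin (d+1) → ℝ)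
    (hcase : (∃ j : Fin d, ∀ r : ℚ, a j.succ ≠ (r:ℝ)) ∨
      ((∀ i : Fin d, ∃ r : ℚ, a i.succ = (r:ℝ)) ∧ (∀ r : ℚ, a 0 ≠ (r:ℝ))))
    (R : ℝ) (hR : 1 ≤ R) :
    ∃ K : ℝ, ∀ c : ℝ, 0 < c → c < 1/8 → ∀ T : ℕ, ∃ N : ℕ, T ≤ N ∧
      volume {x : Fin d → ℝ | (∀ i, |x i| ≤ R) ∧
        ∃ q : Fin (d+1) → ℤ, q ≠ 0 ∧ (∀ i, |(q i : ℝ)| ≤ (N:ℝ)) ∧ ∃ q₀ : ℤ,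
          |(∑ i, (q i : ℝ) * (Fin.snoc x (a 0 + ∑ i : Fin d, a i.succ * x i) : Fin (d+1) → ℝ) i)
            + (q₀:ℝ)| < c / (N:ℝ)^(d+1)}
      ≤ ENNReal.ofReal (K * c) := by
  classical
  set P : ℝ := (2*R)^(d-1) with hP
  have hP0 : 0 ≤ P := by positivity
  rcases hcase with ⟨j₀, hirr⟩ | ⟨hrat, hirr⟩
  · -- Case A : an irrational slope
    refine ⟨3^(d+1) * ((2*(d:ℝ)*R+3)*2*P) + 24*((d:ℝ)*R+2)*P, ?_⟩
    intro c hc hc8 T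
    obtain ⟨N, hTN, hN1, hgood⟩ := exists_goodN (a j₀.succ) hirr T
    refine ⟨N, hTN, ?_⟩
    set ε : ℝ := c / (N:ℝ)^(d+1) with hεdef
    have hNpos : (0:ℝ) < N := by exact_mod_cast hN1
    have hNpow : (1:ℝ) ≤ (N:ℝ)^(d+1) := one_le_pow₀ (by exact_mod_cast hN1)
    have hε0 : 0 < ε := by positivity
    have hεc : ε ≤ c := by
      rw [hεdef, div_le_iff₀ (by positivity)]
      nlinarith
    have hε8 : ε ≤ 1/8 := by linarith
    set V2 : ℝ := ((d:ℝ)*R+2) * ((4*(N:ℝ)) * (2*ε) * P) with hV2def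
    have hV2pos : 0 ≤ V2 := by positivity
    have Hlow : ∀ q : Fin (d+1) → ℤ, q ≠ 0 → (∀ i, q i ∈ Finset.Icc (-(N:ℤ)) N) →
        (∀ i : Fin d, |bb d a q i| < 1/2) →
        ∑ q₀ ∈ Finset.Icc (-(Mz d a R N)) (Mz d a R N),
          volume (slabSet d a R (c/(N:ℝ)^(d+1)) q q₀) ≤ ENNReal.ofReal V2 := by
      intro q hq0 hqmem hlt
      have hm : q (Fin.last d) ≠ 0 := by
        intro h
        exact hq0 (qzero_of_small d a q h hlt)
      have hmabs : |q (Fin.last d)| ≤ (N:ℤ) := by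
        have := hqmem (Fin.last d)
        rw [Finset.mem_Icc] at this
        rw [abs_le]
        omega
      have hγj : (4*(N:ℝ))⁻¹ ≤ |bb d a q j₀| := by
        have h1 := hgood (q (Fin.last d)) (q j₀.castSucc) hm hmabs
        have h2 : bb d a q j₀
            = (q (Fin.last d) : ℝ) * a j₀.succ + (q j₀.castSucc : ℝ) := by
          simp only [bb]; ring
        rw [h2]
        rw [← one_div]
        exact h1
      have hβ : ∀ i, |bb d a q i| ≤ 1/2 := fun i => (hlt i).le
      refine le_trans (b := ENNReal.ofReal ((2*((d:ℝ)*R*(1/2) + ε) + 1)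
        * (((4*(N:ℝ))⁻¹)⁻¹ * (2*ε) * (2*R)^(d-1)))) ?_ ?_
      · simp only [slabSet]
        exact Wq_le d R ε hR hε0 (bb d a q) ((q (Fin.last d) : ℝ) * a 0) _ (1/2)
          ((4*(N:ℝ))⁻¹) hβ j₀ (by positivity) hγj
      · apply ENNReal.ofReal_le_ofReal
        rw [inv_inv]
        rw [hV2def, hP]
        have hfac : 2*((d:ℝ)*R*(1/2) + ε) + 1 ≤ (d:ℝ)*R+2 := by linarith
        have hrest : (0:ℝ) ≤ (4*(N:ℝ)) * (2*ε) * (2*R)^(d-1) := by positivity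
        exact mul_le_mul_of_nonneg_right hfac hrest
    refine le_trans (cover_bound d a R c hR hc hc8 N hN1 V2 Hlow hV2pos) ?_
    apply ENNReal.ofReal_le_ofReal
    have hNR : (1:ℝ) ≤ (N:ℝ) := by exact_mod_cast hN1
    have e1 : (2*(N:ℝ)+1)^(d+1) ≤ 3^(d+1) * (N:ℝ)^(d+1) := by
      rw [← mul_pow]
      apply pow_le_pow_left₀ (by positivity)
      linarith
    have e2 : ε * (N:ℝ)^(d+1) = c := div_mul_cancel₀ _ (by positivity)
    have t1 : (2*(N:ℝ)+1)^(d+1) * ((2*(d:ℝ)*R+3) * (2*(c/(N:ℝ)^(d+1))) * (2*R)^(d-1))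
        ≤ 3^(d+1) * ((2*(d:ℝ)*R+3)*2*P) * c := by
      have h := mul_le_mul_of_nonneg_right e1
        (show (0:ℝ) ≤ (2*(d:ℝ)*R+3) * (2*ε) * (2*R)^(d-1) by positivity)
      calc (2*(N:ℝ)+1)^(d+1) * ((2*(d:ℝ)*R+3) * (2*(c/(N:ℝ)^(d+1))) * (2*R)^(d-1))
          = (2*(N:ℝ)+1)^(d+1) * ((2*(d:ℝ)*R+3) * (2*ε) * (2*R)^(d-1)) := by rw [hεdef]
        _ ≤ 3^(d+1) * (N:ℝ)^(d+1) * ((2*(d:ℝ)*R+3) * (2*ε) * (2*R)^(d-1)) := h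
        _ = 3^(d+1) * ((2*(d:ℝ)*R+3)*2*((2*R)^(d-1))) * (ε * (N:ℝ)^(d+1)) := by ring
        _ = 3^(d+1) * ((2*(d:ℝ)*R+3)*2*P) * c := by rw [e2, hP]
    have hN2 : (N:ℝ)^2 * ε ≤ c := by
      have h1 : (N:ℝ)^2 ≤ (N:ℝ)^(d+1) := by
        apply pow_le_pow_right₀ (by exact_mod_cast hN1)
        have hd1 : 0 < d := j₀.pos
        omega
      calc (N:ℝ)^2 * ε ≤ (N:ℝ)^(d+1) * ε := mul_le_mul_of_nonneg_right h1 hε0.le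
        _ = c := by rw [mul_comm]; exact e2
    have t2 : (2*(N:ℝ)+1) * V2 ≤ 24*((d:ℝ)*R+2)*P * c := by
      have h1 : 2*(N:ℝ)+1 ≤ 3*N := by linarith
      calc (2*(N:ℝ)+1) * V2 ≤ 3*(N:ℝ) * V2 :=
            mul_le_mul_of_nonneg_right h1 hV2pos
        _ = 24*((d:ℝ)*R+2)*P * ((N:ℝ)^2 * ε) := by rw [hV2def]; ring
        _ ≤ 24*((d:ℝ)*R+2)*P * c := by
            apply mul_le_mul_of_nonneg_left hN2 (by positivity)
    calc (2*(N:ℝ)+1)^(d+1) * ((2*(d:ℝ)*R+3) * (2*(c/(N:ℝ)^(d+1))) * (2*R)^(d-1))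
        + (2*(N:ℝ)+1) * V2
        ≤ 3^(d+1) * ((2*(d:ℝ)*R+3)*2*P) * c + 24*((d:ℝ)*R+2)*P * c := add_le_add t1 t2
      _ = (3^(d+1) * ((2*(d:ℝ)*R+3)*2*P) + 24*((d:ℝ)*R+2)*P) * c := by ring
  · -- Case B : all slopes rational, a 0 irrational
    choose r hr using hrat
    set D : ℕ := ∏ i, (r i).den with hD
    have hDpos : 0 < D := Finset.prod_pos (fun i _ => (r i).pos)
    have hDR : (1:ℝ) ≤ (D:ℕ) := by exact_mod_cast hDpos
    have hz : ∀ i : Fin d, ∃ z : ℤ, (a i.succ : ℝ) * D = z := by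
      intro i
      have hdvd : (r i).den ∣ D := Finset.dvd_prod_of_mem _ (Finset.mem_univ i)
      obtain ⟨k, hk⟩ := hdvd
      refine ⟨(r i).num * k, ?_⟩
      rw [hr i, Rat.cast_def]
      have hden : ((r i).den : ℝ) ≠ 0 := by exact_mod_cast (r i).den_nz
      push_cast [hk]
      field_simp
    choose z hzeq using hz
    refine ⟨3^(d+1) * ((2*(d:ℝ)*R+3)*2*P) + 6*(D:ℝ)*((d:ℝ)*R+2)*P, ?_⟩
    intro c hc hc8 T
    obtain ⟨N, hTN, hN1, hgood⟩ := exists_goodN (a 0) hirr T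
    refine ⟨N, hTN, ?_⟩
    set ε : ℝ := c / (N:ℝ)^(d+1) with hεdef
    have hNpos : (0:ℝ) < N := by exact_mod_cast hN1
    have hNpow : (1:ℝ) ≤ (N:ℝ)^(d+1) := one_le_pow₀ (by exact_mod_cast hN1)
    have hε0 : 0 < ε := by positivity
    have hεc : ε ≤ c := by
      rw [hεdef, div_le_iff₀ (by positivity)]
      nlinarith
    have hε8 : ε ≤ 1/8 := by linarith
    have hεN : ε < 1/(4*(N:ℝ)) := by
      have hNd : (1:ℝ) ≤ (N:ℝ)^d := one_le_pow₀ (by exact_mod_cast hN1)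
      rw [hεdef, div_lt_div_iff₀ (by positivity) (by positivity)]
      have hps : (N:ℝ)^(d+1) = (N:ℝ)^d * N := pow_succ _ _
      nlinarith
    set V2 : ℝ := ((d:ℝ)*R+2) * ((D:ℝ) * (2*ε) * P) with hV2def
    have hV2pos : 0 ≤ V2 := by positivity
    have Hlow : ∀ q : Fin (d+1) → ℤ, q ≠ 0 → (∀ i, q i ∈ Finset.Icc (-(N:ℤ)) N) →
        (∀ i : Fin d, |bb d a q i| < 1/2) →
        ∑ q₀ ∈ Finset.Icc (-(Mz d a R N)) (Mz d a R N),
          volume (slabSet d a R (c/(N:ℝ)^(d+1)) q q₀) ≤ ENNReal.ofReal V2 := by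
      intro q hq0 hqmem hlt
      have hm : q (Fin.last d) ≠ 0 := by
        intro h
        exact hq0 (qzero_of_small d a q h hlt)
      have hmabs : |q (Fin.last d)| ≤ (N:ℤ) := by
        have := hqmem (Fin.last d)
        rw [Finset.mem_Icc] at this
        rw [abs_le]
        omega
      by_cases hbz : ∃ i : Fin d, bb d a q i ≠ 0
      · obtain ⟨i₁, hi₁⟩ := hbz
        have hw : ∃ w : ℤ, bb d a q i₁ * D = w := by
          refine ⟨q i₁.castSucc * D + q (Fin.last d) * z i₁, ?_⟩
          have h1 := hzeq i₁
          simp only [bb]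
          push_cast
          linear_combination (q (Fin.last d) : ℝ) * h1
        obtain ⟨w, hweq⟩ := hw
        have hw0 : w ≠ 0 := by
          intro h
          apply hi₁
          rw [h] at hweq
          have hD0 : (D:ℝ) ≠ 0 := by positivity
          push_cast at hweq
          exact (mul_eq_zero.mp hweq).resolve_right hD0
        have hγj : ((D:ℝ))⁻¹ ≤ |bb d a q i₁| := by
          have h1 : (1:ℝ) ≤ |(w:ℝ)| := by
            have := Int.one_le_abs hw0
            exact_mod_cast this
          have h2 : |bb d a q i₁| * (D:ℝ) = |(w:ℝ)| := by
            have h3 := congrArg abs hweq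
            rwa [abs_mul, abs_of_pos (show (0:ℝ) < (D:ℝ) by positivity)] at h3
          rw [inv_eq_one_div, div_le_iff₀ (show (0:ℝ) < (D:ℝ) by positivity)]
          linarith
        have hβ : ∀ i, |bb d a q i| ≤ 1/2 := fun i => (hlt i).le
        refine le_trans (b := ENNReal.ofReal ((2*((d:ℝ)*R*(1/2) + ε) + 1)
            * (((D:ℝ)⁻¹)⁻¹ * (2*ε) * (2*R)^(d-1)))) ?_ ?_
        · simp only [slabSet]
          exact Wq_le d R ε hR hε0 (bb d a q) ((q (Fin.last d) : ℝ) * a 0) _ (1/2)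
            ((D:ℝ)⁻¹) hβ i₁ (by positivity) hγj
        · apply ENNReal.ofReal_le_ofReal
          rw [inv_inv, hV2def, hP]
          have hfac : 2*((d:ℝ)*R*(1/2) + ε) + 1 ≤ (d:ℝ)*R+2 := by linarith
          exact mul_le_mul_of_nonneg_right hfac (by positivity)
      · push_neg at hbz
        have hzero : ∀ q₀ : ℤ, slabSet d a R (c/(N:ℝ)^(d+1)) q q₀ = ∅ := by
          intro q₀
          rw [Set.eq_empty_iff_forall_notMem]
          rintro x ⟨hbox, habs⟩
          have hs0 : (∑ i, bb d a q i * x i) = 0 :=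
            Finset.sum_eq_zero (fun i _ => by rw [hbz i, zero_mul])
          rw [hs0, zero_add] at habs
          have h1 := hgood (q (Fin.last d)) q₀ hm hmabs
          rw [← hεdef] at habs
          have h2 : |(q (Fin.last d) : ℝ) * a 0 + (q₀:ℝ)| < 1/(4*(N:ℝ)) :=
            lt_of_lt_of_le habs hεN.le
          linarith [h1, h2]
        calc ∑ q₀ ∈ Finset.Icc (-(Mz d a R N)) (Mz d a R N),
            volume (slabSet d a R (c/(N:ℝ)^(d+1)) q q₀)
            = 0 := Finset.sum_eq_zero (fun q₀ _ => by rw [hzero q₀, measure_empty])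
          _ ≤ ENNReal.ofReal V2 := zero_le
    refine le_trans (cover_bound d a R c hR hc hc8 N hN1 V2 Hlow hV2pos) ?_
    apply ENNReal.ofReal_le_ofReal
    have hNR : (1:ℝ) ≤ (N:ℝ) := by exact_mod_cast hN1
    have e1 : (2*(N:ℝ)+1)^(d+1) ≤ 3^(d+1) * (N:ℝ)^(d+1) := by
      rw [← mul_pow]
      apply pow_le_pow_left₀ (by positivity)
      linarith
    have e2 : ε * (N:ℝ)^(d+1) = c := div_mul_cancel₀ _ (by positivity)
    have t1 : (2*(N:ℝ)+1)^(d+1) * ((2*(d:ℝ)*R+3) * (2*(c/(N:ℝ)^(d+1))) * (2*R)^(d-1))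
        ≤ 3^(d+1) * ((2*(d:ℝ)*R+3)*2*P) * c := by
      have h := mul_le_mul_of_nonneg_right e1
        (show (0:ℝ) ≤ (2*(d:ℝ)*R+3) * (2*ε) * (2*R)^(d-1) by positivity)
      calc (2*(N:ℝ)+1)^(d+1) * ((2*(d:ℝ)*R+3) * (2*(c/(N:ℝ)^(d+1))) * (2*R)^(d-1))
          = (2*(N:ℝ)+1)^(d+1) * ((2*(d:ℝ)*R+3) * (2*ε) * (2*R)^(d-1)) := by rw [hεdef]
        _ ≤ 3^(d+1) * (N:ℝ)^(d+1) * ((2*(d:ℝ)*R+3) * (2*ε) * (2*R)^(d-1)) := h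
        _ = 3^(d+1) * ((2*(d:ℝ)*R+3)*2*((2*R)^(d-1))) * (ε * (N:ℝ)^(d+1)) := by ring
        _ = 3^(d+1) * ((2*(d:ℝ)*R+3)*2*P) * c := by rw [e2, hP]
    have hN1' : (N:ℝ) * ε ≤ c := by
      have h1 : (N:ℝ) ≤ (N:ℝ)^(d+1) := by
        calc (N:ℝ) = (N:ℝ)^1 := (pow_one _).symm
          _ ≤ (N:ℝ)^(d+1) := pow_le_pow_right₀ (by exact_mod_cast hN1) (by omega)
      calc (N:ℝ) * ε ≤ (N:ℝ)^(d+1) * ε := mul_le_mul_of_nonneg_right h1 hε0.le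
        _ = c := by rw [mul_comm]; exact e2
    have t2 : (2*(N:ℝ)+1) * V2 ≤ 6*(D:ℝ)*((d:ℝ)*R+2)*P * c := by
      have h1 : 2*(N:ℝ)+1 ≤ 3*N := by linarith
      calc (2*(N:ℝ)+1) * V2 ≤ 3*(N:ℝ) * V2 :=
            mul_le_mul_of_nonneg_right h1 hV2pos
        _ = 6*(D:ℝ)*((d:ℝ)*R+2)*P * ((N:ℝ) * ε) := by rw [hV2def]; ring
        _ ≤ 6*(D:ℝ)*((d:ℝ)*R+2)*P * c := by
            apply mul_le_mul_of_nonneg_left hN1' (by positivity)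
    calc (2*(N:ℝ)+1)^(d+1) * ((2*(d:ℝ)*R+3) * (2*(c/(N:ℝ)^(d+1))) * (2*R)^(d-1))
        + (2*(N:ℝ)+1) * V2
        ≤ 3^(d+1) * ((2*(d:ℝ)*R+3)*2*P) * c + 6*(D:ℝ)*((d:ℝ)*R+2)*P * c := add_le_add t1 t2
      _ = (3^(d+1) * ((2*(d:ℝ)*R+3)*2*P) + 6*(D:ℝ)*((d:ℝ)*R+2)*P) * c := by ring

lemma hard_direction (d : ℕ) (a : Fin (d+1) → ℝ)
    (hcase : (∃ j : Fin d, ∀ r : ℚ, a j.succ ≠ (r:ℝ)) ∨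
      ((∀ i : Fin d, ∃ r : ℚ, a i.succ = (r:ℝ)) ∧ (∀ r : ℚ, a 0 ≠ (r:ℝ)))) :
    ∀ᵐ x ∂(volume : Measure (Fin d → ℝ)),
      ¬ IsSingularVec (Fin.snoc x (a 0 + ∑ i : Fin d, a i.succ * x i)) := by
  rw [ae_iff]
  simp only [not_not]
  set S : Set (Fin d → ℝ) :=
    {x | IsSingularVec (Fin.snoc x (a 0 + ∑ i : Fin d, a i.succ * x i))} with hS
  have hbox : ∀ k : ℕ, volume (S ∩ {x : Fin d → ℝ | ∀ i, |x i| ≤ ((k:ℝ)+1)}) = 0 := by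
    intro k
    set R : ℝ := (k:ℝ)+1 with hRdef
    have hR : 1 ≤ R := by
      rw [hRdef]
      have h1 : (0:ℝ) ≤ k := Nat.cast_nonneg k
      linarith
    obtain ⟨K, hK⟩ := main_estimate d a hcase R hR
    have hbound : ∀ c : ℝ, 0 < c → c < 1/8 →
        volume (S ∩ {x : Fin d → ℝ | ∀ i, |x i| ≤ R}) ≤ ENNReal.ofReal (K * c) := by
      intro c hc hc8
      set T : ℕ → Set (Fin d → ℝ) := fun k₀ =>
        {x | (∀ i, |x i| ≤ R) ∧ ∀ Q : ℝ, (k₀:ℝ) ≤ Q →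
          ∃ q : Fin (d+1) → ℤ, q ≠ 0 ∧ ∃ q₀ : ℤ,
            |(∑ i, (q i : ℝ) * (Fin.snoc x (a 0 + ∑ i : Fin d, a i.succ * x i) : Fin (d+1) → ℝ) i)
              + (q₀:ℝ)| < c / Q ^ (d+1) ∧ ∀ i, |(q i : ℝ)| ≤ Q} with hT
      have hmono : Monotone T := by
        intro k1 k2 hk x hx
        exact ⟨hx.1, fun Q hQ => hx.2 Q (le_trans (by exact_mod_cast hk) hQ)⟩
      have hsub : S ∩ {x : Fin d → ℝ | ∀ i, |x i| ≤ R} ⊆ ⋃ k₀ : ℕ, T k₀ := by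
        rintro x ⟨hxS, hxB⟩
        obtain ⟨Q₀, hQ₀pos, hQ₀⟩ := hxS c hc
        refine Set.mem_iUnion.mpr ⟨⌈Q₀⌉₊, hxB, fun Q hQ => ?_⟩
        exact hQ₀ Q (le_trans (Nat.le_ceil Q₀) hQ)
      have hTk : ∀ k₀ : ℕ, volume (T k₀) ≤ ENNReal.ofReal (K * c) := by
        intro k₀
        obtain ⟨N, hTN, hvol⟩ := hK c hc hc8 k₀
        refine le_trans (measure_mono ?_) hvol
        rintro x ⟨hxB, hx⟩
        have hNk : ((k₀:ℝ)) ≤ (N:ℝ) := by exact_mod_cast hTN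
        obtain ⟨q, hq0, q₀, habs, hqle⟩ := hx (N:ℝ) hNk
        exact ⟨hxB, q, hq0, hqle, q₀, habs⟩
      calc volume (S ∩ {x : Fin d → ℝ | ∀ i, |x i| ≤ R})
          ≤ volume (⋃ k₀ : ℕ, T k₀) := measure_mono hsub
        _ = ⨆ k₀ : ℕ, volume (T k₀) := hmono.measure_iUnion
        _ ≤ ENNReal.ofReal (K * c) := iSup_le hTk
    have h0 : Tendsto (fun c : ℝ => ENNReal.ofReal (K*c)) (nhdsWithin 0 (Set.Ioi 0)) (nhds 0) := by
      have h1 : Tendsto (fun c : ℝ => K*c) (nhds 0) (nhds (K*0)) :=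
        (continuous_const.mul continuous_id).tendsto (0:ℝ)
      rw [mul_zero] at h1
      have h2 : Tendsto (fun c : ℝ => ENNReal.ofReal (K*c)) (nhdsWithin 0 (Set.Ioi 0))
          (nhds (ENNReal.ofReal 0)) :=
        (ENNReal.continuous_ofReal.tendsto 0).comp
          (h1.mono_left (nhdsWithin_le_nhds (s := Set.Ioi (0:ℝ))))
      simpa using h2
    have hev : ∀ᶠ c in nhdsWithin (0:ℝ) (Set.Ioi 0),
        volume (S ∩ {x : Fin d → ℝ | ∀ i, |x i| ≤ R}) ≤ ENNReal.ofReal (K*c) := by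
      filter_upwards [Ioo_mem_nhdsGT_of_mem
        (Set.left_mem_Ico.mpr (by norm_num : (0:ℝ) < 1/8))] with c hc
      exact hbound c hc.1 hc.2
    exact le_antisymm (ge_of_tendsto h0 hev) zero_le
  have hcov : S ⊆ ⋃ k : ℕ, S ∩ {x : Fin d → ℝ | ∀ i, |x i| ≤ ((k:ℝ)+1)} := by
    intro x hx
    obtain ⟨k, hk⟩ := exists_nat_ge (∑ i, |x i|)
    refine Set.mem_iUnion.mpr ⟨k, hx, fun i => ?_⟩
    have h1 : |x i| ≤ ∑ j, |x j| :=
      Finset.single_le_sum (f := fun j => |x j|) (fun j _ => abs_nonneg _) (Finset.mem_univ i)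
    linarith
  have hle : volume S ≤ ∑' k : ℕ, volume (S ∩ {x : Fin d → ℝ | ∀ i, |x i| ≤ ((k:ℝ)+1)}) :=
    (measure_mono hcov).trans (measure_iUnion_le _)
  exact le_antisymm (hle.trans_eq (ENNReal.tsum_eq_zero.mpr hbox)) zero_le

/-- Theorem: writing `n = d + 1 ≥ 1`, for the affine hyperplane
`𝓛_a = {(x, a₀ + a₁x₁ + ⋯ + a_d x_d) : x ∈ ℝ^d} ⊆ ℝ^n`, one has `a ∉ ℚ^n` iff
Lebesgue-a.e. point of `𝓛_a` is not singular. -/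
theorem stmt_3 (d : ℕ) (a : Fin (d+1) → ℝ) :
    (¬ ∀ i, ∃ r : ℚ, a i = (r : ℝ)) ↔
      ∀ᵐ x ∂(volume : Measure (Fin d → ℝ)),
        ¬ IsSingularVec (Fin.snoc x (a 0 + ∑ i : Fin d, a i.succ * x i)) := by
  constructor
  · intro hL
    push_neg at hL
    obtain ⟨i, hi⟩ := hL
    apply hard_direction
    by_cases hsl : ∃ j : Fin d, ∀ r : ℚ, a j.succ ≠ (r:ℝ)
    · exact Or.inl hsl
    · push_neg at hsl
      refine Or.inr ⟨fun j => hsl j, ?_⟩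
      have hi0 : i = 0 := by
        by_contra h
        obtain ⟨j, hj⟩ := Fin.exists_succ_eq.mpr h
        obtain ⟨r, hr⟩ := hsl j
        exact hi r (by rw [← hj]; exact hr)
      rw [← hi0]
      exact hi
  · intro hae hall
    choose r hr using hall
    have hsing : ∀ x : Fin d → ℝ,
        IsSingularVec (Fin.snoc x (a 0 + ∑ i : Fin d, a i.succ * x i)) :=
      rational_singular d a r hr
    rw [ae_iff] at hae
    have huniv : {x : Fin d → ℝ |
        ¬¬ IsSingularVec (Fin.snoc x (a 0 + ∑ i : Fin d, a i.succ * x i))} = Set.univ := by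
      ext x; simp [hsing x]
    rw [huniv] at hae
    have h1 : volume (Set.pi Set.univ fun _ : Fin d => Set.Icc (0:ℝ) 1) = 1 := by
      rw [volume_pi_pi]
      simp
    have h2 : (1:ℝ≥0∞) ≤ 0 := by
      rw [← h1, ← hae]
      exact measure_mono (Set.subset_univ _)
    simp at h2
end

section
/- Let n ≥ 1 and let a = (a₁, …, a_n) ∈ ℝ^n, viewed as an n×1 matrix. If a is n-singular, i.e. for every c > 0 there exists Q₀ > 0 such that for every real Q ≥ Q₀ there exist a nonzero integer q and p = (p₁,…,p_n) ∈ ℤ^n with max_{1≤i≤n} |q·a_i + p_i| < c/Q^n and |q| ≤ Q, then a ∈ ℚ^n, i.e. every a_i is rational. -/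
open MeasureTheory Filter

/-- Auxiliary: a single irrational real cannot be `1`-singular (with constant `1/4`). -/
lemma aux_not_singular (α : ℝ) (hα : Irrational α)
    (Q₀ : ℝ) (hQ₀ : 0 < Q₀)
    (H : ∀ Q : ℝ, Q₀ ≤ Q → ∃ q : ℤ, q ≠ 0 ∧ ∃ p : ℤ,
      |(q : ℝ) * α + (p : ℝ)| < (1/4) / Q ∧ |(q : ℝ)| ≤ Q) : False := by
  have hne : ∀ (q p : ℤ), q ≠ 0 → (q : ℝ) * α + (p : ℝ) ≠ 0 := by
    intro q p hq h0
    refine hα ⟨(-p : ℚ) / (q : ℚ), ?_⟩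
    have hq' : (q : ℝ) ≠ 0 := Int.cast_ne_zero.mpr hq
    push_cast
    field_simp
    linarith
  -- the set of |q| for witnesses
  have hT : ∃ m : ℕ, ∃ Q : ℝ, ∃ q p : ℤ, Q₀ ≤ Q ∧ q ≠ 0 ∧ q.natAbs = m ∧
      |(q : ℝ)| ≤ Q ∧ |(q : ℝ) * α + (p : ℝ)| < (1/4) / Q := by
    obtain ⟨q, hq, p, hp, hqQ⟩ := H Q₀ le_rfl
    exact ⟨q.natAbs, Q₀, q, p, le_rfl, hq, rfl, hqQ, hp⟩
  classical
  obtain ⟨Q₁, q₁, p₁, hQ₁, hq₁, hm, hq₁Q, hp₁⟩ := Nat.find_spec hT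
  set m := Nat.find hT with hmdef
  set ε := |(q₁ : ℝ) * α + (p₁ : ℝ)| with hεdef
  have hε : 0 < ε := abs_pos.mpr (hne q₁ p₁ hq₁)
  have hQ₁pos : 0 < Q₁ := lt_of_lt_of_le hQ₀ hQ₁
  have hεQ : ε < (1/4) / Q₁ := hp₁
  set Q₂ : ℝ := (1/4) / ε with hQ₂def
  have hQ₂pos : 0 < Q₂ := by positivity
  have hQ₁Q₂ : Q₁ < Q₂ := by
    rw [hQ₂def, lt_div_iff₀ hε]
    rw [lt_div_iff₀ hQ₁pos] at hεQ
    linarith [hεQ]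
  have hQ₀Q₂ : Q₀ ≤ Q₂ := le_of_lt (lt_of_le_of_lt hQ₁ hQ₁Q₂)
  obtain ⟨q₂, hq₂, p₂, hp₂, hq₂Q⟩ := H Q₂ hQ₀Q₂
  have hc : (1/4) / Q₂ = ε := by
    rw [hQ₂def]; field_simp
  rw [hc] at hp₂
  -- determinant is zero
  have hq₁abs : 0 < |(q₁ : ℝ)| := by
    rw [abs_pos]; exact Int.cast_ne_zero.mpr hq₁
  have hDbound : |((q₁ * p₂ - q₂ * p₁ : ℤ) : ℝ)| < 1 := by
    have key : ((q₁ * p₂ - q₂ * p₁ : ℤ) : ℝ)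
        = (q₁ : ℝ) * ((q₂ : ℝ) * α + p₂) - (q₂ : ℝ) * ((q₁ : ℝ) * α + p₁) := by
      push_cast; ring
    rw [key]
    have h1 : |(q₁ : ℝ) * ((q₂ : ℝ) * α + p₂)| < 1/4 := by
      rw [abs_mul]
      calc |(q₁ : ℝ)| * |(q₂ : ℝ) * α + p₂| ≤ Q₁ * |(q₂ : ℝ) * α + p₂| := by
            apply mul_le_mul_of_nonneg_right hq₁Q (abs_nonneg _)
        _ < Q₁ * ε := by
            apply mul_lt_mul_of_pos_left hp₂ hQ₁pos
        _ < Q₁ * ((1/4) / Q₁) := by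
            apply mul_lt_mul_of_pos_left hεQ hQ₁pos
        _ = 1/4 := by field_simp
    have h2 : |(q₂ : ℝ) * ((q₁ : ℝ) * α + p₁)| ≤ 1/4 := by
      rw [abs_mul, ← hεdef]
      calc |(q₂ : ℝ)| * ε ≤ Q₂ * ε := by
            apply mul_le_mul_of_nonneg_right hq₂Q (le_of_lt hε)
        _ = 1/4 := by rw [hQ₂def]; field_simp
    calc |(q₁ : ℝ) * ((q₂ : ℝ) * α + p₂) - (q₂ : ℝ) * ((q₁ : ℝ) * α + p₁)|
        ≤ |(q₁ : ℝ) * ((q₂ : ℝ) * α + p₂)| + |(q₂ : ℝ) * ((q₁ : ℝ) * α + p₁)| :=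
          abs_sub _ _
      _ < 1 := by linarith
  have hD : q₁ * p₂ - q₂ * p₁ = 0 := by
    have h' : |q₁ * p₂ - q₂ * p₁| < 1 := by
      rw [← Int.cast_abs] at hDbound
      exact_mod_cast hDbound
    rcases abs_lt.mp h' with ⟨h1', h2'⟩
    omega
  -- hence q₁ (q₂ α + p₂) = q₂ (q₁ α + p₁)
  have hprop : (q₁ : ℝ) * ((q₂ : ℝ) * α + p₂) = (q₂ : ℝ) * ((q₁ : ℝ) * α + p₁) := by
    have : ((q₁ * p₂ : ℤ) : ℝ) = ((q₂ * p₁ : ℤ) : ℝ) := by exact_mod_cast (by omega : q₁ * p₂ = q₂ * p₁)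
    push_cast at this
    linarith [this, mul_comm (q₁:ℝ) ((q₂:ℝ)*α)]
  have habs : |(q₁ : ℝ)| * |(q₂ : ℝ) * α + p₂| = |(q₂ : ℝ)| * ε := by
    rw [hεdef, ← abs_mul, ← abs_mul, hprop]
  -- |q₂| < |q₁|
  have hlt : |(q₂ : ℝ)| < |(q₁ : ℝ)| := by
    by_contra hge
    push_neg at hge
    have h1 : |(q₁ : ℝ)| * |(q₂ : ℝ) * α + p₂| < |(q₁ : ℝ)| * ε :=
      mul_lt_mul_of_pos_left hp₂ hq₁abs
    have h2 : |(q₁ : ℝ)| * ε ≤ |(q₂ : ℝ)| * ε :=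
      mul_le_mul_of_nonneg_right hge (le_of_lt hε)
    linarith [habs]
  have hZ : |q₂| < |q₁| := by
    rw [← Int.cast_abs, ← Int.cast_abs] at hlt
    exact_mod_cast hlt
  have hnatlt : q₂.natAbs < m := by
    rw [← hm]
    rw [Int.abs_eq_natAbs, Int.abs_eq_natAbs] at hZ
    exact_mod_cast hZ
  exact Nat.find_min hT hnatlt ⟨Q₂, q₂, p₂, hQ₀Q₂, hq₂, rfl, hq₂Q, hp₂.trans_eq hc.symm⟩

/-- Theorem: if `a ∈ ℝ^n`, viewed as an `n × 1` matrix, is `n`-singular, then every `a i`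
is rational. -/
theorem stmt_12 (n : ℕ) (hn : 1 ≤ n) (a : Fin n → ℝ)
    (h : ∀ c : ℝ, 0 < c → ∃ Q₀ : ℝ, 0 < Q₀ ∧ ∀ Q : ℝ, Q₀ ≤ Q →
      ∃ q : ℤ, q ≠ 0 ∧ ∃ p : Fin n → ℤ,
        (∀ i, |(q : ℝ) * a i + (p i : ℝ)| < c / Q ^ n) ∧ |(q : ℝ)| ≤ Q) :
    ∀ i, ∃ r : ℚ, a i = (r : ℝ) := by
  intro i
  by_contra hr
  push_neg at hr
  have hirr : Irrational (a i) := by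
    rintro ⟨r, hr'⟩
    exact hr r hr'.symm
  obtain ⟨Q₀, hQ₀, H⟩ := h (1/4) (by norm_num)
  refine aux_not_singular (a i) hirr (max Q₀ 1) (lt_of_lt_of_le one_pos (le_max_right _ _)) ?_
  intro Q hQ
  have hQ1 : (1 : ℝ) ≤ Q := le_trans (le_max_right _ _) hQ
  obtain ⟨q, hq, p, hp, hqQ⟩ := H Q (le_trans (le_max_left _ _) hQ)
  refine ⟨q, hq, p i, ?_, hqQ⟩
  have hpow : Q ≤ Q ^ n := by
    calc Q = Q ^ 1 := (pow_one Q).symm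
      _ ≤ Q ^ n := pow_le_pow_right₀ hQ1 hn
  have : (1/4 : ℝ) / Q ^ n ≤ (1/4) / Q := by
    apply div_le_div_of_nonneg_left (by norm_num) (by linarith) hpow
  exact lt_of_lt_of_le (hp i) this
end

section
/- Let 0 ≤ s < n and let A be an (s+1)×(n−s) real matrix. If A is n-singular, then every point of the affine subspace 𝓛_A is singular; that is, for every x ∈ ℝ^s the vector (x, x̃A) ∈ ℝ^n is singular. -/
open MeasureTheory Filter

/-- A real `k×l` matrix `A` is `ω`-singular (here `Q ^ ω` is `Real.rpow`). -/
def IsMatSingular {k l : ℕ} (A : Matrix (Fin k) (Fin l) ℝ) (ω : ℝ) : Prop :=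
  ∀ c : ℝ, 0 < c → ∃ Q₀ : ℝ, 0 < Q₀ ∧ ∀ Q : ℝ, Q₀ ≤ Q →
    ∃ q : Fin l → ℤ, q ≠ 0 ∧ ∃ p : Fin k → ℤ,
      (∀ i, |(∑ j, A i j * (q j : ℝ)) + (p i : ℝ)| < c / Q ^ ω) ∧ ∀ j, |(q j : ℝ)| ≤ Q

/-- The point `(x, x̃A)` of the affine subspace `𝓛_A ⊆ ℝ^n`, `n = s + m`, `x̃ = (1, x)`. -/
noncomputable def affVec {s m : ℕ} (A : Matrix (Fin (s+1)) (Fin m) ℝ) (x : Fin s → ℝ) :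
    Fin (s + m) → ℝ :=
  Fin.append x (fun l => ∑ i, (Fin.cons 1 x : Fin (s+1) → ℝ) i * A i l)

lemma key_identity (s m : ℕ) (A : Matrix (Fin (s+1)) (Fin m) ℝ) (x : Fin s → ℝ)
    (q : Fin m → ℤ) (p : Fin (s+1) → ℤ) :
    (∑ k : Fin (s+m), ((Fin.append (fun i : Fin s => p i.succ) q : Fin (s+m) → ℤ) k : ℝ) *
        affVec A x k) + (p 0 : ℝ)
    = ((∑ j, A 0 j * (q j : ℝ)) + (p 0 : ℝ))
      + ∑ i : Fin s, x i * ((∑ j, A i.succ j * (q j : ℝ)) + (p i.succ : ℝ)) := by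
  unfold affVec
  rw [Fin.sum_univ_add]
  simp only [Fin.append_left, Fin.append_right, Fin.sum_univ_succ, Fin.cons_zero, Fin.cons_succ]
  simp only [Finset.mul_sum, Finset.sum_mul, Finset.sum_add_distrib, add_mul, mul_add]
  rw [Finset.sum_comm]
  have h1 : ∑ j : Fin m, (q j : ℝ) * (1 * A 0 j) = ∑ j : Fin m, A 0 j * (q j : ℝ) :=
    Finset.sum_congr rfl fun j _ => by ring
  have h2 : ∑ i : Fin s, (p i.succ : ℝ) * x i = ∑ i : Fin s, x i * (p i.succ : ℝ) :=
    Finset.sum_congr rfl fun i _ => mul_comm _ _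
  have h3 : ∑ i : Fin s, ∑ j : Fin m, (q j : ℝ) * (x i * A i.succ j)
      = ∑ i : Fin s, ∑ j : Fin m, x i * (A i.succ j * (q j : ℝ)) :=
    Finset.sum_congr rfl fun i _ => Finset.sum_congr rfl fun j _ => by ring
  rw [h1, h2, h3]
  abel

/-- Theorem: writing `n = s + m` with `m = n - s ≥ 1`, if `A` is `n`-singular then every
point of `𝓛_A` is singular. -/
theorem stmt_13 (s m : ℕ) (hm : 1 ≤ m) (A : Matrix (Fin (s+1)) (Fin m) ℝ)
    (hA : IsMatSingular A ((s + m : ℕ) : ℝ)) :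
    ∀ x : Fin s → ℝ, IsSingularVec (affVec A x) := by
  intro x c hc
  set n := s + m with hn
  set X : ℝ := ∑ i, |x i| with hXdef
  have hX : 0 ≤ X := Finset.sum_nonneg fun i _ => abs_nonneg _
  set M : ℝ := ∑ i, ∑ j, |A i j| with hMdef
  have hM : 0 ≤ M := Finset.sum_nonneg fun i _ => Finset.sum_nonneg fun j _ => abs_nonneg _
  have hAij : ∀ i j, |A i j| ≤ M := by
    intro i j
    calc |A i j| ≤ ∑ j', |A i j'| :=
          Finset.single_le_sum (f := fun j' => |A i j'|) (fun j' _ => abs_nonneg _)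
            (Finset.mem_univ j)
      _ ≤ M := Finset.single_le_sum (f := fun i' => ∑ j', |A i' j'|)
          (fun i' _ => Finset.sum_nonneg fun j' _ => abs_nonneg _) (Finset.mem_univ i)
  set C : ℝ := m * M + 1 with hCdef
  have hC1 : (1:ℝ) ≤ C := by
    have : (0:ℝ) ≤ m * M := mul_nonneg (Nat.cast_nonneg m) hM
    linarith
  have hC0 : (0:ℝ) < C := lt_of_lt_of_le one_pos hC1
  set c' : ℝ := c / ((1 + X) * C ^ n) with hc'def
  have h1X : (0:ℝ) < 1 + X := by linarith
  have hc' : 0 < c' := div_pos hc (mul_pos h1X (pow_pos hC0 n))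
  obtain ⟨Q₀', hQ₀', hmain⟩ := hA c' hc'
  refine ⟨C * max Q₀' (max 1 c'), by positivity, ?_⟩
  intro Q hQ
  set Q' : ℝ := Q / C with hQ'def
  have hQ'ge : max Q₀' (max 1 c') ≤ Q' := (le_div_iff₀ hC0).2 (by rw [mul_comm]; exact hQ)
  have hQ'1 : (1:ℝ) ≤ Q' := le_trans (le_trans (le_max_left _ _) (le_max_right _ _)) hQ'ge
  have hQ'c' : c' ≤ Q' := le_trans (le_trans (le_max_right _ _) (le_max_right _ _)) hQ'ge
  have hQ'pos : (0:ℝ) < Q' := lt_of_lt_of_le one_pos hQ'1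
  have hQeq : Q = C * Q' := by rw [hQ'def]; field_simp
  have hQpos : (0:ℝ) < Q := hQeq ▸ mul_pos hC0 hQ'pos
  obtain ⟨q, hq0, p, hbound, hqle⟩ := hmain Q' (le_trans (le_max_left _ _) hQ'ge)
  have hrpow : Q' ^ ((n : ℕ) : ℝ) = Q' ^ n := Real.rpow_natCast _ _
  set ε : ℝ := c' / Q' ^ n with hεdef
  have hε : 0 < ε := div_pos hc' (pow_pos hQ'pos n)
  have hbound' : ∀ i, |(∑ j, A i j * (q j : ℝ)) + (p i : ℝ)| < ε := by
    intro i; have := hbound i; rwa [hrpow] at this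
  have hεc' : ε ≤ c' := by
    rw [hεdef]
    apply div_le_of_le_mul₀ (by positivity) (le_of_lt hc')
    exact le_mul_of_one_le_right (le_of_lt hc') (one_le_pow₀ hQ'1)
  -- bound on p components
  have hple : ∀ i : Fin (s+1), |(p i : ℝ)| ≤ Q := by
    intro i
    have h4 : |(p i : ℝ)| ≤ |(∑ j, A i j * (q j : ℝ)) + (p i : ℝ)| + |∑ j, A i j * (q j : ℝ)| := by
      have h := abs_sub ((∑ j, A i j * (q j : ℝ)) + (p i : ℝ)) (∑ j, A i j * (q j : ℝ))
      simpa [add_sub_cancel_left] using h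
    have h5 : |∑ j, A i j * (q j : ℝ)| ≤ m * M * Q' := by
      calc |∑ j, A i j * (q j : ℝ)| ≤ ∑ j, |A i j * (q j : ℝ)| := Finset.abs_sum_le_sum_abs _ _
        _ ≤ ∑ _j : Fin m, M * Q' := Finset.sum_le_sum fun j _ => by
            rw [abs_mul]
            exact mul_le_mul (hAij i j) (hqle j) (abs_nonneg _) hM
        _ = m * M * Q' := by rw [Finset.sum_const, Finset.card_univ, Fintype.card_fin,
              nsmul_eq_mul]; ring
    have h6 : ε ≤ Q' := le_trans hεc' hQ'c'
    calc |(p i : ℝ)| ≤ ε + m * M * Q' := by linarith [le_of_lt (hbound' i), h4, h5]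
      _ ≤ Q' + m * M * Q' := by linarith
      _ = C * Q' := by rw [hCdef]; ring
      _ = Q := hQeq.symm
  refine ⟨Fin.append (fun i : Fin s => p i.succ) q, ?_, p 0, ?_, ?_⟩
  · -- nonzero
    intro h
    apply hq0
    funext j
    have := congrFun h (Fin.natAdd s j)
    rwa [Fin.append_right] at this
  · -- main estimate
    rw [key_identity]
    have hstep : |((∑ j, A 0 j * (q j : ℝ)) + (p 0 : ℝ))
        + ∑ i : Fin s, x i * ((∑ j, A i.succ j * (q j : ℝ)) + (p i.succ : ℝ))|
        < ε + X * ε := by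
      have ha := abs_add_le ((∑ j, A 0 j * (q j : ℝ)) + (p 0 : ℝ))
        (∑ i : Fin s, x i * ((∑ j, A i.succ j * (q j : ℝ)) + (p i.succ : ℝ)))
      have hb : |∑ i : Fin s, x i * ((∑ j, A i.succ j * (q j : ℝ)) + (p i.succ : ℝ))|
          ≤ X * ε := by
        calc |∑ i : Fin s, x i * ((∑ j, A i.succ j * (q j : ℝ)) + (p i.succ : ℝ))|
            ≤ ∑ i : Fin s, |x i * ((∑ j, A i.succ j * (q j : ℝ)) + (p i.succ : ℝ))| :=
              Finset.abs_sum_le_sum_abs _ _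
          _ ≤ ∑ i : Fin s, |x i| * ε := Finset.sum_le_sum fun i _ => by
              rw [abs_mul]
              exact mul_le_mul_of_nonneg_left (le_of_lt (hbound' i.succ)) (abs_nonneg _)
          _ = X * ε := by rw [← Finset.sum_mul]
      linarith [hbound' 0]
    have heq : ε + X * ε = c / Q ^ n := by
      rw [hεdef, hc'def, hQeq]
      rw [mul_pow]
      field_simp
    rw [← heq]; exact hstep
  · -- component bounds
    intro k
    refine Fin.addCases ?_ ?_ k
    · intro i; rw [Fin.append_left]; exact hple i.succ
    · intro j; rw [Fin.append_right]
      exact le_trans (hqle j) (by nlinarith)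
end
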